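/- Let k₀ ∈ L²([0,1]²) be a real stochastic kernel with k₀ ≥ l a.e. on [0,1]² for some 0 < l < 1 (so F_l = [0,1]² up to measure zero), whose integral operator L₀ on L²([0,1]) satisfies the mixing condition (A1). Let λ₀ ∈ ℝ, λ₀ ≠ 0, and let e, ê ∈ L²([0,1]) be real-valued with L₀ e = λ₀ e and L₀ᵀ ê = λ₀ ê, where L₀ᵀ is the integral operator with kernel (x,y) ↦ k₀(y,x). Set E(x,y) := λ₀ ê(x) e(y) and assume there is a set of y of positive measure on which ∫₀¹ E⁺(x,y) dx > 0 and ∫₀¹ E⁻(x,y) dx > 0. Then the unique minimizer of k ↦ ∫₀¹∫₀¹ k(x,y) E(x,y) dx dy over {k ∈ V_ker : ‖k‖_{L²([0,1]²)} = 1} is k̇(x,y) = sgn(λ₀) · (e(y)/‖e‖₂) · ( (∫₀¹ ê dm) − ê(x) ) / ‖(∫₀¹ ê dm)·𝟙 − ê‖₂. -/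

import Mathlib

open MeasureTheory
open scoped ENNReal

/-- Lebesgue measure restricted to the unit interval `[0,1]`. -/
noncomputable def μ01 : Measure ℝ := volume.restrict (Set.Icc (0 : ℝ) 1)

/-- Two-dimensional Lebesgue measure restricted to the unit square `[0,1]²`. -/
noncomputable def ν01 : Measure (ℝ × ℝ) := μ01.prod μ01

/-- The feasible set `{k ∈ V_ker : ‖k‖₂ = 1}`. -/
def feasVker : Set (Lp ℝ 2 ν01) :=
  {k : Lp ℝ 2 ν01 | (∀ᵐ y ∂μ01, ∫ x, k (x, y) ∂μ01 = 0) ∧ ‖k‖ = 1}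

/-- The objective `k ↦ ∫∫ k(x,y) E(x,y) dx dy`. -/
noncomputable def JobjE (E : ℝ × ℝ → ℝ) (k : Lp ℝ 2 ν01) : ℝ :=
  ∫ y, (∫ x, k (x, y) * E (x, y) ∂μ01) ∂μ01

instance : IsProbabilityMeasure μ01 := by
  constructor
  rw [μ01, Measure.restrict_apply_univ]
  simp [Real.volume_Icc]

instance : IsProbabilityMeasure ν01 :=
  show IsProbabilityMeasure (μ01.prod μ01) from inferInstance

lemma nu01_def : ν01 = μ01.prod μ01 := rfl

lemma memLp2_sep {A B : ℝ → ℝ} (hA : MemLp A 2 μ01) (hB : MemLp B 2 μ01) :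
    MemLp (fun p : ℝ × ℝ => A p.1 * B p.2) 2 ν01 := by
  rw [nu01_def]
  refine ⟨(hA.1.comp_quasiMeasurePreserving Measure.quasiMeasurePreserving_fst).mul
    (hB.1.comp_quasiMeasurePreserving Measure.quasiMeasurePreserving_snd), ?_⟩
  rw [eLpNorm_lt_top_iff_lintegral_rpow_enorm_lt_top (by norm_num) (by norm_num)]
  show ∫⁻ p, ((‖A p.1 * B p.2‖₊ : ℝ≥0∞)) ^ ((2:ℝ≥0∞).toReal) ∂(μ01.prod μ01) < ⊤
  have h2 : ((2:ℝ≥0∞)).toReal = ((2:ℕ):ℝ) := by norm_num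
  have hpt : ∀ p : ℝ × ℝ, ((‖A p.1 * B p.2‖₊ : ℝ≥0∞)) ^ ((2:ℝ≥0∞).toReal)
      = ((‖A p.1‖₊ : ℝ≥0∞) ^ (2:ℕ)) * ((‖B p.2‖₊ : ℝ≥0∞) ^ (2:ℕ)) := by
    intro p
    rw [h2, ENNReal.rpow_natCast, nnnorm_mul, ENNReal.coe_mul, mul_pow]
  simp_rw [hpt]
  rw [lintegral_prod_mul (f := fun x => (‖A x‖₊ : ℝ≥0∞) ^ (2:ℕ))
    (g := fun x => (‖B x‖₊ : ℝ≥0∞) ^ (2:ℕ)) (hA.1.enorm.pow aemeasurable_const)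
    (hB.1.enorm.pow aemeasurable_const)]
  have key : ∀ (f : ℝ → ℝ), MemLp f 2 μ01 → (∫⁻ x, (‖f x‖₊ : ℝ≥0∞) ^ (2:ℕ) ∂μ01) < ⊤ := by
    intro f hf
    have := (eLpNorm_lt_top_iff_lintegral_rpow_enorm_lt_top (p := 2) (by norm_num)
      (by norm_num)).1 hf.2
    replace this : ∫⁻ x, (‖f x‖₊ : ℝ≥0∞) ^ ((2:ℝ≥0∞).toReal) ∂μ01 < ⊤ := this
    simpa [h2, ENNReal.rpow_natCast] using this
  exact ENNReal.mul_lt_top (key A hA) (key B hB)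

lemma ae_slices {P : ℝ × ℝ → Prop} (h : ∀ᵐ p ∂ν01, P p) :
    ∀ᵐ y ∂μ01, ∀ᵐ x ∂μ01, P (x, y) := by
  have hs : ∀ᵐ q ∂(μ01.prod μ01), P (q.2, q.1) :=
    (Measure.measurePreserving_swap (μ := μ01) (ν := μ01)).quasiMeasurePreserving.ae h
  exact Measure.ae_ae_of_ae_prod hs

lemma L2_integral_sq {α : Type*} [MeasurableSpace α] {μ : Measure α} (f : Lp ℝ 2 μ) :
    ∫ x, f x * f x ∂μ = ‖f‖ ^ 2 := by
  rw [← real_inner_self_eq_norm_sq, L2.inner_def]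
  simp [RCLike.inner_apply, conj_trivial, sq]

lemma Jobj_eq_integral (c lam : ℝ) (ehat e : Lp ℝ 2 μ01) (W : Lp ℝ 2 ν01)
    (hWae : (W : ℝ × ℝ → ℝ) =ᵐ[ν01] fun p => lam * (ehat p.1 - c) * e p.2)
    (k : Lp ℝ 2 ν01) (hker : ∀ᵐ y ∂μ01, ∫ x, k (x, y) ∂μ01 = 0) :
    JobjE (fun p => lam * ehat p.1 * e p.2) k = ∫ p, k p * W p ∂ν01 := by
  have hkW : Integrable (fun p => k p * W p) ν01 := by
    have := L2.integrable_inner (𝕜 := ℝ) W k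
    simpa [RCLike.inner_apply, conj_trivial] using this
  have hkw : Integrable (fun p : ℝ × ℝ => k p * (lam * (ehat p.1 - c) * e p.2)) ν01 :=
    hkW.congr (hWae.mono fun p hp => by dsimp only; rw [hp])
  have hk1 : Integrable (fun p : ℝ × ℝ => k p) ν01 := (Lp.memLp k).integrable one_le_two
  have hkw' : ∀ᵐ y ∂μ01, Integrable
      (fun x => k (x, y) * (lam * (ehat x - c) * e y)) μ01 := hkw.prod_left_ae
  have hk1' : ∀ᵐ y ∂μ01, Integrable (fun x => k (x, y)) μ01 := hk1.prod_left_ae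
  have key : ∀ᵐ y ∂μ01, (∫ x, k (x, y) * (lam * ehat x * e y) ∂μ01)
      = ∫ x, k (x, y) * (lam * (ehat x - c) * e y) ∂μ01 := by
    filter_upwards [hkw', hk1', hker] with y h1 h2 h3
    have hsplit : (fun x => k (x, y) * (lam * ehat x * e y))
        = fun x => k (x, y) * (lam * (ehat x - c) * e y) + k (x, y) * (lam * c * e y) := by
      funext x; ring
    rw [hsplit, integral_add h1 (h2.mul_const _), integral_mul_const, h3, zero_mul, add_zero]
  have hswap : (∫ y, ∫ x, k (x, y) * (lam * (ehat x - c) * e y) ∂μ01 ∂μ01)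
      = ∫ x, ∫ y, k (x, y) * (lam * (ehat x - c) * e y) ∂μ01 ∂μ01 := by
    exact (integral_integral_swap hkw).symm
  calc JobjE (fun p => lam * ehat p.1 * e p.2) k
      = ∫ y, ∫ x, k (x, y) * (lam * (ehat x - c) * e y) ∂μ01 ∂μ01 := by
        exact integral_congr_ae key
    _ = ∫ x, ∫ y, k (x, y) * (lam * (ehat x - c) * e y) ∂μ01 ∂μ01 := hswap
    _ = ∫ p, k p * (lam * (ehat p.1 - c) * e p.2) ∂ν01 := (integral_prod _ hkw).symm
    _ = ∫ p, k p * W p ∂ν01 :=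
        integral_congr_ae (hWae.mono fun p hp => by dsimp only; rw [hp])

/-- When the second eigenvalue `λ₀` is real and the stochastic
kernel satisfies `k₀ ≥ l` a.e., the unique minimizer of `k ↦ ∫∫ k E` over
`{k ∈ V_ker : ‖k‖₂ = 1}` (with `E(x,y) = λ₀ ê(x) e(y)`) is
`k̇(x,y) = sgn(λ₀) (e(y)/‖e‖₂) ((∫ ê) − ê(x)) / ‖(∫ ê)𝟙 − ê‖₂`. -/
theorem optimal_kernel_perturbation_for_mixing_real_eigenvalue
    (k₀ : ℝ × ℝ → ℝ) (hk₀L2 : MemLp k₀ 2 ν01)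
    (hk₀stoch : ∀ᵐ y ∂μ01, ∫ x, k₀ (x, y) ∂μ01 = 1)
    (l : ℝ) (hl0 : 0 < l) (hl1 : l < 1)
    (hk₀ge : ∀ᵐ p ∂ν01, l ≤ k₀ p)
    (L₀ : Lp ℝ 2 μ01 →L[ℝ] Lp ℝ 2 μ01)
    (hL₀ : ∀ f : Lp ℝ 2 μ01, ∀ᵐ x ∂μ01, (L₀ f) x = ∫ y, k₀ (x, y) * f y ∂μ01)
    (hmix : ∀ g : Lp ℝ 2 μ01, (∫ x, g x ∂μ01) = 0 →
      Filter.Tendsto (fun n : ℕ => ‖(L₀ ^ n) g‖) Filter.atTop (nhds 0))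
    (L₀t : Lp ℝ 2 μ01 →L[ℝ] Lp ℝ 2 μ01)
    (hL₀t : ∀ f : Lp ℝ 2 μ01, ∀ᵐ x ∂μ01, (L₀t f) x = ∫ y, k₀ (y, x) * f y ∂μ01)
    (lam : ℝ) (hlam : lam ≠ 0)
    (e ehat : Lp ℝ 2 μ01)
    (he : L₀ e = lam • e) (hehat : L₀t ehat = lam • ehat)
    (S : Set ℝ) (hS : S ⊆ Set.Icc (0 : ℝ) 1) (hSpos : 0 < volume S)
    (hEpos : ∀ y ∈ S, 0 < ∫ x, max (lam * ehat x * e y) 0 ∂μ01)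
    (hEneg : ∀ y ∈ S, 0 < ∫ x, max (-(lam * ehat x * e y)) 0 ∂μ01) :
    ∃ kdot : Lp ℝ 2 ν01,
      (∀ᵐ p ∂ν01, kdot p =
        Real.sign lam * (e p.2 / ‖e‖) *
          (((∫ z, ehat z ∂μ01) - ehat p.1) /
            (eLpNorm (fun x => (∫ z, ehat z ∂μ01) - ehat x) 2 μ01).toReal)) ∧
      kdot ∈ feasVker ∧
      (∀ k ∈ feasVker,
        JobjE (fun p => lam * ehat p.1 * e p.2) kdot ≤
          JobjE (fun p => lam * ehat p.1 * e p.2) k) ∧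
      (∀ k ∈ feasVker,
        (∀ k' ∈ feasVker,
          JobjE (fun p => lam * ehat p.1 * e p.2) k ≤
            JobjE (fun p => lam * ehat p.1 * e p.2) k') →
        k = kdot) := by
  classical
  set c : ℝ := ∫ z, ehat z ∂μ01 with hc
  set N : ℝ := (eLpNorm (fun x => c - ehat x) 2 μ01).toReal with hNdef
  -- basic membership facts
  have hehat_mem : MemLp (fun x => (ehat : ℝ → ℝ) x) 2 μ01 := Lp.memLp ehat
  have hg_mem : MemLp (fun x => c - ehat x) 2 μ01 := (memLp_const c).sub hehat_mem
  have hA_mem : MemLp (fun x => lam * (ehat x - c)) 2 μ01 :=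
    (hehat_mem.sub (memLp_const c)).const_mul lam
  have hW_mem : MemLp (fun p : ℝ × ℝ => lam * (ehat p.1 - c) * e p.2) 2 ν01 :=
    memLp2_sep hA_mem (Lp.memLp e)
  set W : Lp ℝ 2 ν01 := hW_mem.toLp _ with hWdef
  have hWae : (W : ℝ × ℝ → ℝ) =ᵐ[ν01] fun p => lam * (ehat p.1 - c) * e p.2 :=
    hW_mem.coeFn_toLp
  -- positivity of μ01 S
  have hμS : 0 < μ01 S := by
    rw [μ01, Measure.restrict_apply' measurableSet_Icc, Set.inter_eq_left.mpr hS]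
    exact hSpos
  -- e is nonzero on S
  have hSne : ∀ y ∈ S, (e : ℝ → ℝ) y ≠ 0 := by
    intro y hy hy0
    have h := hEpos y hy
    simp [hy0] at h
  -- e ≠ 0
  have he0 : e ≠ 0 := by
    intro h
    have h0 : (e : ℝ → ℝ) =ᵐ[μ01] 0 := by rw [h]; exact Lp.coeFn_zero ℝ 2 μ01
    have hnull : μ01 {y | ¬ (e : ℝ → ℝ) y = 0} = 0 := ae_iff.mp h0
    have : μ01 S = 0 := measure_mono_null (fun y hy => hSne y hy) hnull
    exact absurd this hμS.ne'
  have henorm : (0:ℝ) < ‖e‖ := norm_pos_iff.mpr he0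
  -- ehat is not a.e. constant
  have hSnonempty : S.Nonempty := nonempty_of_measure_ne_zero hμS.ne'
  obtain ⟨y₀, hy₀⟩ := hSnonempty
  have hg0 : ¬ ((fun x => c - (ehat : ℝ → ℝ) x) =ᵐ[μ01] 0) := by
    intro hzero
    have hconst : (ehat : ℝ → ℝ) =ᵐ[μ01] fun _ => c := by
      filter_upwards [hzero] with x hx
      have : c - (ehat : ℝ → ℝ) x = 0 := hx
      linarith
    have h1 : (∫ x, max (lam * ehat x * e y₀) 0 ∂μ01) = max (lam * c * e y₀) 0 := by
      rw [integral_congr_ae (g := fun _ : ℝ => max (lam * c * e y₀) 0)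
        (hconst.mono fun x hx => by simp only [hx])]
      simp
    have h2 : (∫ x, max (-(lam * ehat x * e y₀)) 0 ∂μ01) = max (-(lam * c * e y₀)) 0 := by
      rw [integral_congr_ae (g := fun _ : ℝ => max (-(lam * c * e y₀)) 0)
        (hconst.mono fun x hx => by simp only [hx])]
      simp
    have p1 := hEpos y₀ hy₀
    have p2 := hEneg y₀ hy₀
    rw [h1] at p1; rw [h2] at p2
    have q1 : 0 < lam * c * e y₀ := by
      rcases lt_max_iff.mp p1 with h | h
      · exact h
      · exact absurd h (lt_irrefl 0)
    have q2 : 0 < -(lam * c * e y₀) := by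
      rcases lt_max_iff.mp p2 with h | h
      · exact h
      · exact absurd h (lt_irrefl 0)
    linarith
  have hgne : eLpNorm (fun x => c - (ehat : ℝ → ℝ) x) 2 μ01 ≠ 0 := by
    rw [Ne, eLpNorm_eq_zero_iff hg_mem.1 (by norm_num)]
    exact hg0
  have hNpos : (0:ℝ) < N := by
    rw [hNdef]
    exact ENNReal.toReal_pos hgne hg_mem.2.ne
  -- the norm of W
  set F : Lp ℝ 2 μ01 := hg_mem.toLp _ with hFdef
  have hFae : (F : ℝ → ℝ) =ᵐ[μ01] fun x => c - ehat x := hg_mem.coeFn_toLp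
  have hFnorm : ‖F‖ = N := by rw [hFdef, hNdef]; exact Lp.norm_toLp _ _
  have hWnorm : ‖W‖ = |lam| * N * ‖e‖ := by
    have hWsq : ‖W‖ ^ 2 = (|lam| * N * ‖e‖) ^ 2 := by
      have h1 : ∫ p, W p * W p ∂ν01
          = ∫ p, (lam * (ehat p.1 - c) * e p.2) * (lam * (ehat p.1 - c) * e p.2) ∂ν01 :=
        integral_congr_ae (hWae.mono fun p hp => by dsimp only; rw [hp])
      have h2 : (fun p : ℝ × ℝ =>
            (lam * (ehat p.1 - c) * e p.2) * (lam * (ehat p.1 - c) * e p.2))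
          = fun p : ℝ × ℝ => (fun x => (lam * (ehat x - c)) * (lam * (ehat x - c))) p.1 *
              (fun y => (e : ℝ → ℝ) y * e y) p.2 := by
        funext p; dsimp only; ring
      have h3 := integral_prod_mul (μ := μ01) (ν := μ01)
        (fun x => (lam * ((ehat : ℝ → ℝ) x - c)) * (lam * (ehat x - c)))
        (fun y => (e : ℝ → ℝ) y * e y)
      have h5 : ∫ x, (F : ℝ → ℝ) x * F x ∂μ01 = N ^ 2 := by
        rw [L2_integral_sq, hFnorm]
      have h6 : ∫ x, (lam * ((ehat : ℝ → ℝ) x - c)) * (lam * (ehat x - c)) ∂μ01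
          = lam ^ 2 * N ^ 2 := by
        have h7 : (fun x => (lam * ((ehat : ℝ → ℝ) x - c)) * (lam * (ehat x - c)))
            =ᵐ[μ01] fun x => lam ^ 2 * ((F : ℝ → ℝ) x * F x) := by
          filter_upwards [hFae] with x hx
          rw [hx]; ring
        rw [integral_congr_ae h7, integral_const_mul, h5]
      have h8 : ∫ y, (e : ℝ → ℝ) y * e y ∂μ01 = ‖e‖ ^ 2 := L2_integral_sq e
      calc ‖W‖ ^ 2 = ∫ p, W p * W p ∂ν01 := (L2_integral_sq W).symm
        _ = ∫ p : ℝ × ℝ, (fun x => (lam * ((ehat : ℝ → ℝ) x - c)) * (lam * (ehat x - c))) p.1 *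
              (fun y => (e : ℝ → ℝ) y * e y) p.2 ∂ν01 := by rw [h1, h2]
        _ = (∫ x, (lam * ((ehat : ℝ → ℝ) x - c)) * (lam * (ehat x - c)) ∂μ01) *
              ∫ y, (e : ℝ → ℝ) y * e y ∂μ01 := h3
        _ = lam ^ 2 * N ^ 2 * ‖e‖ ^ 2 := by rw [h6, h8]
        _ = (|lam| * N * ‖e‖) ^ 2 := by rw [← sq_abs lam]; ring
    calc ‖W‖ = Real.sqrt (‖W‖ ^ 2) := (Real.sqrt_sq (norm_nonneg W)).symm
      _ = Real.sqrt ((|lam| * N * ‖e‖) ^ 2) := by rw [hWsq]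
      _ = |lam| * N * ‖e‖ := Real.sqrt_sq (by positivity)
  have hlamabs : (0:ℝ) < |lam| := abs_pos.mpr hlam
  have hWpos : (0:ℝ) < ‖W‖ := by rw [hWnorm]; positivity
  -- the candidate minimizer
  set kdot : Lp ℝ 2 ν01 := (-‖W‖⁻¹) • W with hkdotdef
  have h_ae_kdot : (kdot : ℝ × ℝ → ℝ)
      =ᵐ[ν01] fun p => -‖W‖⁻¹ * (lam * (ehat p.1 - c) * e p.2) := by
    filter_upwards [Lp.coeFn_smul (-‖W‖⁻¹) W, hWae] with p h1 h2
    have h1' : (kdot : ℝ × ℝ → ℝ) p = (-‖W‖⁻¹ • (W : ℝ × ℝ → ℝ)) p := h1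
    rw [h1', Pi.smul_apply, smul_eq_mul, h2]
  -- the explicit formula
  have hform : ∀ p : ℝ × ℝ, -‖W‖⁻¹ * (lam * (ehat p.1 - c) * e p.2)
      = Real.sign lam * (e p.2 / ‖e‖) * ((c - ehat p.1) / N) := by
    intro p
    rw [hWnorm]
    rcases hlam.lt_or_gt with hneg | hpos
    · rw [Real.sign_of_neg hneg, abs_of_neg hneg]
      field_simp
      ring
    · rw [Real.sign_of_pos hpos, abs_of_pos hpos]
      field_simp
      ring
  have hkdot_ae : ∀ᵐ p ∂ν01, (kdot : ℝ × ℝ → ℝ) p =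
      Real.sign lam * (e p.2 / ‖e‖) * ((c - ehat p.1) / N) := by
    filter_upwards [h_ae_kdot] with p hp
    rw [hp, hform p]
  -- kdot is feasible
  have hkdot_ker : ∀ᵐ y ∂μ01, ∫ x, (kdot : ℝ × ℝ → ℝ) (x, y) ∂μ01 = 0 := by
    have hs := ae_slices h_ae_kdot
    have hint : Integrable (fun x => (ehat : ℝ → ℝ) x - c) μ01 :=
      (hehat_mem.integrable one_le_two).sub (integrable_const c)
    have hint0 : ∫ x, ((ehat : ℝ → ℝ) x - c) ∂μ01 = 0 := by
      rw [integral_sub (hehat_mem.integrable one_le_two) (integrable_const c)]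
      simp [hc]
    filter_upwards [hs] with y hy
    have heq : ∫ x, (kdot : ℝ × ℝ → ℝ) (x, y) ∂μ01
        = ∫ x, (-‖W‖⁻¹ * (lam * e y)) * ((ehat : ℝ → ℝ) x - c) ∂μ01 := by
      refine integral_congr_ae (hy.mono fun x hx => ?_)
      show (kdot : ℝ × ℝ → ℝ) (x, y) = -‖W‖⁻¹ * (lam * e y) * ((ehat : ℝ → ℝ) x - c)
      rw [hx]; ring
    rw [heq, integral_const_mul, hint0, mul_zero]
  have hkdot_norm : ‖kdot‖ = 1 := by
    rw [hkdotdef, norm_smul]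
    simp only [norm_neg, norm_inv, Real.norm_eq_abs, abs_norm]
    exact inv_mul_cancel₀ hWpos.ne'
  have hkdot_feas : kdot ∈ feasVker := ⟨hkdot_ker, hkdot_norm⟩
  -- objective as inner product
  have hJ : ∀ k : Lp ℝ 2 ν01, (∀ᵐ y ∂μ01, ∫ x, (k : ℝ × ℝ → ℝ) (x, y) ∂μ01 = 0) →
      JobjE (fun p => lam * ehat p.1 * e p.2) k = inner (𝕜 := ℝ) k W := by
    intro k hk
    rw [Jobj_eq_integral c lam ehat e W hWae k hk, L2.inner_def]
    refine integral_congr_ae (Filter.Eventually.of_forall fun p => ?_)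
    simp [RCLike.inner_apply, conj_trivial, mul_comm]
  have hJkdot : JobjE (fun p => lam * ehat p.1 * e p.2) kdot = -‖W‖ := by
    rw [hJ kdot hkdot_ker, hkdotdef]
    rw [real_inner_smul_left, real_inner_self_eq_norm_sq]
    have : ‖W‖ ^ 2 = ‖W‖ * ‖W‖ := sq ‖W‖
    rw [this]
    field_simp
  have hJlower : ∀ k ∈ feasVker,
      -‖W‖ ≤ JobjE (fun p => lam * ehat p.1 * e p.2) k := by
    intro k hk
    rw [hJ k hk.1]
    have habs := abs_real_inner_le_norm k W
    rw [hk.2, one_mul] at habs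
    have := neg_abs_le (inner (𝕜 := ℝ) k W : ℝ)
    linarith
  refine ⟨kdot, hkdot_ae, hkdot_feas, ?_, ?_⟩
  · intro k hk
    rw [hJkdot]
    exact hJlower k hk
  · intro k hk hmin
    have h1 : JobjE (fun p => lam * ehat p.1 * e p.2) k ≤ -‖W‖ := by
      rw [← hJkdot]; exact hmin kdot hkdot_feas
    have h2 := hJlower k hk
    have h3 : inner (𝕜 := ℝ) k W = -‖W‖ := by
      rw [← hJ k hk.1]; linarith
    have h4 : inner (𝕜 := ℝ) (-k) W = ‖-k‖ * ‖W‖ := by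
      rw [inner_neg_left, h3, norm_neg, hk.2, one_mul, neg_neg]
    have h5 : ‖W‖ • (-k) = ‖-k‖ • W := inner_eq_norm_mul_iff_real.mp h4
    rw [norm_neg, hk.2, one_smul] at h5
    have h6 : -k = ‖W‖⁻¹ • W := by
      have h7 := congrArg (fun z : Lp ℝ 2 ν01 => ‖W‖⁻¹ • z) h5
      simpa [smul_smul, inv_mul_cancel₀ hWpos.ne'] using h7
    have h8 : k = (-‖W‖⁻¹) • W := by
      rw [neg_smul, ← h6, neg_neg]
    rw [hkdotdef]
    exact h8
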